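/- Let a ∈ F_{2^n} with a ≠ 0 and a ≠ 1. If the polynomial μ(x) = x^2 + a·x + a^2/(1+a) has two roots λ and ν in F_{2^n}, then Tr(1/(λ+1)) = 0 and Tr(1/(ν+1)) = 0, where Tr is the absolute trace from F_{2^n} to F_2. -/

import Mathlib

-- Tr(x^2 + x) = 0 : telescoping sum and x^(2^n) = x
lemma tr_aux_stmt3 {F : Type*} [Field F] [Fintype F] [CharP F 2] {n : ℕ}
    (hcard : Fintype.card F = 2 ^ n) (x : F) :
    ∑ i ∈ Finset.range n, (x ^ 2 + x) ^ 2 ^ i = 0 := by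
  have h : ∀ i, (x ^ 2 + x) ^ 2 ^ i = x ^ 2 ^ (i + 1) - x ^ 2 ^ i := by
    intro i
    rw [add_pow_char_pow, CharTwo.sub_eq_add, ← pow_mul, ← pow_succ']
  simp_rw [h]
  rw [Finset.sum_range_sub (fun i => x ^ 2 ^ i)]
  simp [← hcard, FiniteField.pow_card]

theorem stmt3 {F : Type*} [Field F] [Fintype F] {n : ℕ} (hn : 0 < n)
    (hcard : Fintype.card F = 2 ^ n) (a l v : F) (ha0 : a ≠ 0) (ha1 : a ≠ 1)
    (hlv : l ≠ v)
    (hl : l ^ 2 + a * l + a ^ 2 / (1 + a) = 0)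
    (hv : v ^ 2 + a * v + a ^ 2 / (1 + a) = 0) :
    (∑ i ∈ Finset.range n, ((l + 1)⁻¹) ^ 2 ^ i) = 0 ∧
      (∑ i ∈ Finset.range n, ((v + 1)⁻¹) ^ 2 ^ i) = 0 := by
  obtain ⟨m, hprime, hc⟩ := FiniteField.card F (ringChar F)
  have h2 : ringChar F = 2 := by
    have hdvd : ringChar F ∣ 2 ^ n := by
      rw [← hcard, hc]; exact dvd_pow_self _ m.ne_zero
    exact (Nat.prime_dvd_prime_iff_eq hprime Nat.prime_two).mp
      (hprime.dvd_of_dvd_pow hdvd)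
  haveI : CharP F 2 := h2 ▸ ringChar.charP F
  have two0 : (2 : F) = 0 := CharTwo.two_eq_zero
  have h1a : (1 : F) + a ≠ 0 := by
    intro h; exact ha1 (by linear_combination h - two0)
  have hc_l : (l ^ 2 + a * l) * (1 + a) = a ^ 2 := by
    field_simp at hl; linear_combination hl - a ^ 2 * two0
  have hc_v : (v ^ 2 + a * v) * (1 + a) = a ^ 2 := by
    field_simp at hv; linear_combination hv - a ^ 2 * two0
  -- l + v = a
  have hne : l + v ≠ 0 := by
    rw [← CharTwo.sub_eq_add]; exact sub_ne_zero_of_ne hlv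
  have hsq : (l + v) * (l + v) = a * (l + v) := by
    have hd : l ^ 2 - v ^ 2 + a * (l - v) = 0 := by linear_combination hl - hv
    linear_combination hd + (l * v + v ^ 2 - a * l) * two0
  have hveq : v = a + l := by
    have := mul_right_cancel₀ hne hsq
    linear_combination this - l * two0
  subst hveq
  -- l + 1 ≠ 0 and (a+l) + 1 ≠ 0
  have hl1 : l + 1 ≠ 0 := by
    intro h
    exact one_ne_zero (α := F)
      (by linear_combination hc_l + (-(1 + a) * l + 1 - a ^ 2) * h + a ^ 2 * two0)
  have hv1 : (a + l) + 1 ≠ 0 := by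
    intro h
    exact one_ne_zero (α := F)
      (by linear_combination hc_v + (-(1 + a) * (a + l) + 1 - a ^ 2) * h + a ^ 2 * two0)
  -- (l/a)^2 + l/a = (1+a)⁻¹  and symmetric
  have hinv_l : (l * a⁻¹) ^ 2 + l * a⁻¹ = ((1 : F) + a)⁻¹ := by
    field_simp
    linear_combination hc_l
  have hinv_v : ((a + l) * a⁻¹) ^ 2 + (a + l) * a⁻¹ = ((1 : F) + a)⁻¹ := by
    field_simp
    linear_combination hc_v
  -- key identities
  have keyl : (l + 1)⁻¹ = ((a + l) ^ 2 + (a + l)) + ((l * a⁻¹) ^ 2 + l * a⁻¹) := by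
    rw [hinv_l]
    field_simp
    linear_combination (2 + a + l) * hc_l - (3*a*l + 4*a*l^2 + a*l^3 + 3*a^2*l + 2*a^2*l^2 + a^3*l + l + 2*l^2 + l^3) * two0
  have keyv : ((a + l) + 1)⁻¹ = (l ^ 2 + l) + (((a + l) * a⁻¹) ^ 2 + (a + l) * a⁻¹) := by
    rw [hinv_v]
    field_simp
    linear_combination hc_v + (1 + l) * hc_l - (3*a*l + 3*a*l^2 + a*l^3 + 2*a^2*l + a^2*l^2 + a^3 + l + 2*l^2 + l^3) * two0
  have split : ∀ x y : F, (∑ i ∈ Finset.range n, (x + y) ^ 2 ^ i)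
      = (∑ i ∈ Finset.range n, x ^ 2 ^ i) + ∑ i ∈ Finset.range n, y ^ 2 ^ i := by
    intro x y
    simp_rw [add_pow_char_pow]
    exact Finset.sum_add_distrib
  constructor
  · rw [keyl, split, tr_aux_stmt3 hcard (a + l), tr_aux_stmt3 hcard (l * a⁻¹), add_zero]
  · rw [keyv, split, tr_aux_stmt3 hcard l, tr_aux_stmt3 hcard ((a + l) * a⁻¹), add_zero]
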